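/- Let M be a nonzero graded holonomic generalized Eulerian A₁(K)-module such that multiplication by X on M is bijective (M = M_X). Then H₁(∂; M) = ker(∂ : M → M) is nonzero. -/
import Mathlib


/-- Multiplication by the variable `X` as a `K`-linear endomorphism of a `K[X]`-module. -/
noncomputable def mulX1 (K : Type) [Field K] (M : Type) [AddCommGroup M] [Module K M]
    [Module (Polynomial K) M] [SMulCommClass K (Polynomial K) M] : Module.End K M where
  toFun x := (Polynomial.X : Polynomial K) • x
  map_add' _ _ := smul_add _ _ _
  map_smul' a x := (smul_comm a _ x).symm

/-- Holonomicity (Bernstein class) for a module over the first Weyl algebra `A₁(K)`: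
finitely many generators `g 0, …, g (t-1)` over `A₁(K)` together with the growth bound
`dim_K span {X^α ∂^β (g i) : α + β ≤ j} ≤ C (j+1)`. -/
noncomputable def IsHolonomic1 (K : Type) [Field K] (M : Type) [AddCommGroup M]
    [Module K M] [Module (Polynomial K) M] (D : Module.End K M) : Prop :=
  ∃ (t : ℕ) (g : Fin t → M) (C : ℕ),
    Submodule.span K
      {x : M | ∃ (i : Fin t) (α β : ℕ),
        x = (Polynomial.X ^ α : Polynomial K) • ((D ^ β) (g i))} = ⊤ ∧
    ∀ j : ℕ,
      Module.finrank K
        (Submodule.span K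
          {x : M | ∃ (i : Fin t) (α β : ℕ), α + β ≤ j ∧
            x = (Polynomial.X ^ α : Polynomial K) • ((D ^ β) (g i))}) ≤ C * (j + 1)

/-- A nonzero graded holonomic generalized Eulerian `A₁(K)`-module `M`
on which multiplication by `X` is bijective has nonzero first de Rham homology
`H₁(∂; M) = ker ∂`. -/
theorem ker_deRham_ne_bot_of_X_bijective
    (K : Type) [Field K] [CharZero K]
    (M : Type) [AddCommGroup M] [Module K M] [Module (Polynomial K) M]
    [IsScalarTower K (Polynomial K) M] [SMulCommClass K (Polynomial K) M]
    (D : Module.End K M)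
    -- Leibniz rule
    (hleib : ∀ (f : Polynomial K) (x : M),
      D (f • x) = (Polynomial.derivative f) • x + f • (D x))
    -- grading
    (ℳ : ℤ → Submodule K M)
    (hdecomp : DirectSum.IsInternal ℳ)
    (hgradeX : ∀ (j : ℤ) (x : M), x ∈ ℳ j → (Polynomial.X : Polynomial K) • x ∈ ℳ (j + 1))
    (hgradeD : ∀ (j : ℤ) (x : M), x ∈ ℳ j → D x ∈ ℳ (j - 1))
    -- generalized Eulerian: `(ε − deg z)^a z = 0` for homogeneous `z`, where `ε = X∂`
    (hGE : ∀ (j : ℤ) (z : M), z ∈ ℳ j →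
      ∃ a : ℕ, 0 < a ∧ ((mulX1 K M * D - j • 1) ^ a) z = 0)
    -- holonomic
    (hhol : IsHolonomic1 K M D)
    -- multiplication by `X` is bijective on `M`
    (hbij : Function.Bijective fun x : M => (Polynomial.X : Polynomial K) • x)
    -- `M` is nonzero
    (hM : ∃ x : M, x ≠ 0) :
    LinearMap.ker D ≠ ⊥ := by
  intro hker
  have hDinj : Function.Injective D := by
    rw [← LinearMap.ker_eq_bot]; exact hker
  have hXinj : Function.Injective (fun x : M => (Polynomial.X : Polynomial K) • x) := hbij.1
  have hεinj : Function.Injective ⇑(mulX1 K M * D) := by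
    intro x y h
    apply hDinj
    apply hXinj
    simpa [mulX1, Module.End.mul_apply] using h
  have hpowinj : ∀ (f : Module.End K M), Function.Injective ⇑f → ∀ n : ℕ,
      Function.Injective ⇑(f ^ n) := by
    intro f hf n
    have h : ⇑(f ^ n) = f^[n] := funext fun x => Module.End.pow_apply f n x
    rw [h]
    exact hf.iterate n
  -- degree 0 component vanishes
  have hM0 : ∀ z : M, z ∈ ℳ 0 → z = 0 := by
    intro z hz
    obtain ⟨a, hapos, hz0⟩ := hGE 0 z hz
    have h1 : ((mulX1 K M * D) ^ a) z = 0 := by simpa using hz0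
    have h2 := hpowinj _ hεinj a
    have h3 : ((mulX1 K M * D) ^ a) z = ((mulX1 K M * D) ^ a) 0 := by
      simpa using h1
    exact h2 h3
  -- D^n transports degree j to degree j - n
  have hDn : ∀ (n : ℕ) (j : ℤ) (z : M), z ∈ ℳ j → (D ^ n) z ∈ ℳ (j - n) := by
    intro n
    induction n with
    | zero => intro j z hz; simpa using hz
    | succ n ih =>
      intro j z hz
      have h1 : (D ^ (n + 1)) z = D ((D ^ n) z) := by
        rw [pow_succ', Module.End.mul_apply]
      rw [h1]
      have h2 := hgradeD (j - n) _ (ih j z hz)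
      have : (j : ℤ) - n - 1 = j - (n + 1 : ℕ) := by push_cast; ring
      rwa [this] at h2
  -- X^n transports degree j to degree j + n
  have hXn : ∀ (n : ℕ) (j : ℤ) (z : M), z ∈ ℳ j →
      ((Polynomial.X : Polynomial K) ^ n) • z ∈ ℳ (j + n) := by
    intro n
    induction n with
    | zero => intro j z hz; simpa using hz
    | succ n ih =>
      intro j z hz
      have h1 : ((Polynomial.X : Polynomial K) ^ (n + 1)) • z
          = (Polynomial.X : Polynomial K) • (((Polynomial.X : Polynomial K) ^ n) • z) := by
        rw [pow_succ', mul_smul]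
      rw [h1]
      have h2 := hgradeX (j + n) _ (ih j z hz)
      have : (j : ℤ) + n + 1 = j + (n + 1 : ℕ) := by push_cast; ring
      rwa [this] at h2
  -- injectivity of X^n •
  have hXninj : ∀ (n : ℕ) (z : M), ((Polynomial.X : Polynomial K) ^ n) • z = 0 → z = 0 := by
    intro n
    induction n with
    | zero => intro z hz; simpa using hz
    | succ n ih =>
      intro z hz
      rw [pow_succ, mul_smul] at hz
      have := ih _ hz
      have h2 : (fun x : M => (Polynomial.X : Polynomial K) • x) z
          = (fun x : M => (Polynomial.X : Polynomial K) • x) 0 := by simpa using this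
      exact hXinj h2
  -- all components vanish
  have hzero : ∀ (j : ℤ) (z : M), z ∈ ℳ j → z = 0 := by
    intro j z hz
    rcases le_or_gt 0 j with hj | hj
    · -- j ≥ 0 : use D^j
      have hcast : ((j.toNat : ℤ)) = j := Int.toNat_of_nonneg hj
      have h1 : (D ^ j.toNat) z ∈ ℳ 0 := by
        have := hDn j.toNat j z hz
        rwa [hcast, sub_self] at this
      have h2 : (D ^ j.toNat) z = 0 := hM0 _ h1
      have h3 : (D ^ j.toNat) z = (D ^ j.toNat) 0 := by simpa using h2
      exact hpowinj D hDinj j.toNat h3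
    · -- j < 0 : use X^(-j)
      set n := (-j).toNat with hn
      have hcast : ((n : ℤ)) = -j := Int.toNat_of_nonneg (by omega)
      have h1 : ((Polynomial.X : Polynomial K) ^ n) • z ∈ ℳ 0 := by
        have := hXn n j z hz
        rwa [hcast, add_neg_cancel] at this
      exact hXninj n z (hM0 _ h1)
  -- conclude M = 0, contradiction
  obtain ⟨x, hx⟩ := hM
  have htop : iSup ℳ = ⊤ := hdecomp.submodule_iSup_eq_top
  have hle : (⊤ : Submodule K M) ≤ ⊥ := by
    rw [← htop]
    exact iSup_le fun j z hz => (Submodule.mem_bot K).mpr (hzero j z hz)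
  exact hx ((Submodule.mem_bot K).mp (hle Submodule.mem_top))
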